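/- An (m,m)-function F is APN if and only if the number N_4(F) of quadruples (x,y,z,t) ∈ (F_2^m)^4 with x+y+z+t = 0 and F(x)+F(y)+F(z)+F(t) = 0 equals 3q^2 − 2q, where q = 2^m. -/

import Mathlib

open Finset

/-- `F` is almost perfect nonlinear: every derivative equation has at most 2 solutions. -/
def IsAPN {m : ℕ} (F : (Fin m → ZMod 2) → (Fin m → ZMod 2)) : Prop :=
  ∀ u : Fin m → ZMod 2, u ≠ 0 → ∀ v : Fin m → ZMod 2,
    (Finset.univ.filter (fun x : Fin m → ZMod 2 => F (x + u) + F x = v)).card ≤ 2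

section Aux

variable {m : ℕ}

private lemma vadd_self (a : Fin m → ZMod 2) : a + a = 0 := by
  funext i; exact CharTwo.add_self_eq_zero _

private lemma vadd_eq_zero {a b : Fin m → ZMod 2} : a + b = 0 ↔ a = b := by
  constructor
  · intro h
    have : a + b + b = b := by rw [h, zero_add]
    rwa [add_assoc, vadd_self, add_zero] at this
  · rintro rfl; exact vadd_self a

/-- The set of "trivial" quadruples: two pairs of equal entries. -/
private def trivQ (m : ℕ) :
    Finset ((Fin m → ZMod 2) × (Fin m → ZMod 2) × (Fin m → ZMod 2) × (Fin m → ZMod 2)) :=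
  Finset.univ.filter (fun p =>
    (p.1 = p.2.1 ∧ p.2.2.1 = p.2.2.2) ∨ (p.1 = p.2.2.1 ∧ p.2.1 = p.2.2.2) ∨
    (p.1 = p.2.2.2 ∧ p.2.1 = p.2.2.1))

private lemma card_trivQ : (trivQ m).card + 2 * 2 ^ m = 3 * (2 ^ m) ^ 2 := by
  classical
  set V := Fin m → ZMod 2
  have hq : Fintype.card V = 2 ^ m := by simp [V, Fintype.card_fun, ZMod.card]
  set A : Finset (V × V × V × V) :=
    Finset.univ.filter (fun p => p.1 = p.2.1 ∧ p.2.2.1 = p.2.2.2) with hA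
  set B : Finset (V × V × V × V) :=
    Finset.univ.filter (fun p => p.1 = p.2.2.1 ∧ p.2.1 = p.2.2.2) with hB
  set C : Finset (V × V × V × V) :=
    Finset.univ.filter (fun p => p.1 = p.2.2.2 ∧ p.2.1 = p.2.2.1) with hC
  have hT : trivQ m = (A ∪ B) ∪ C := by
    ext p
    simp [trivQ, hA, hB, hC, mem_union, mem_filter, or_assoc]
  have cardA : A.card = (2 ^ m) ^ 2 := by
    have : A = Finset.univ.image (fun ab : V × V => (ab.1, ab.1, ab.2, ab.2)) := by
      ext ⟨x, y, z, t⟩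
      simp only [hA, mem_filter, mem_univ, true_and, mem_image, Prod.ext_iff, Prod.exists]
      constructor
      · rintro ⟨rfl, rfl⟩; exact ⟨x, z, by simp⟩
      · rintro ⟨a, b, rfl, rfl, rfl, rfl⟩; exact ⟨rfl, rfl⟩
    rw [this, Finset.card_image_of_injective _ (by
      rintro ⟨a, b⟩ ⟨c, d⟩ h
      simp only [Prod.mk.injEq] at h
      exact Prod.ext h.1 h.2.2.1),
      card_univ, Fintype.card_prod, hq, sq]
  have cardB : B.card = (2 ^ m) ^ 2 := by
    have : B = Finset.univ.image (fun ab : V × V => (ab.1, ab.2, ab.1, ab.2)) := by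
      ext ⟨x, y, z, t⟩
      simp only [hB, mem_filter, mem_univ, true_and, mem_image, Prod.ext_iff, Prod.exists]
      constructor
      · rintro ⟨rfl, rfl⟩; exact ⟨x, y, by simp⟩
      · rintro ⟨a, b, rfl, rfl, rfl, rfl⟩; exact ⟨rfl, rfl⟩
    rw [this, Finset.card_image_of_injective _ (by
      rintro ⟨a, b⟩ ⟨c, d⟩ h
      simp only [Prod.mk.injEq] at h
      exact Prod.ext h.1 h.2.1),
      card_univ, Fintype.card_prod, hq, sq]
  have cardC : C.card = (2 ^ m) ^ 2 := by
    have : C = Finset.univ.image (fun ab : V × V => (ab.1, ab.2, ab.2, ab.1)) := by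
      ext ⟨x, y, z, t⟩
      simp only [hC, mem_filter, mem_univ, true_and, mem_image, Prod.ext_iff, Prod.exists]
      constructor
      · rintro ⟨rfl, rfl⟩; exact ⟨x, y, by simp⟩
      · rintro ⟨a, b, rfl, rfl, rfl, rfl⟩; exact ⟨rfl, rfl⟩
    rw [this, Finset.card_image_of_injective _ (by
      rintro ⟨a, b⟩ ⟨c, d⟩ h
      simp only [Prod.mk.injEq] at h
      exact Prod.ext h.1 h.2.1),
      card_univ, Fintype.card_prod, hq, sq]
  set D : Finset (V × V × V × V) :=
    Finset.univ.filter (fun p => p.1 = p.2.1 ∧ p.2.1 = p.2.2.1 ∧ p.2.2.1 = p.2.2.2) with hD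
  have cardD : D.card = 2 ^ m := by
    have : D = Finset.univ.image (fun a : V => (a, a, a, a)) := by
      ext ⟨x, y, z, t⟩
      simp only [hD, mem_filter, mem_univ, true_and, mem_image, Prod.ext_iff]
      constructor
      · rintro ⟨rfl, rfl, rfl⟩; exact ⟨x, by simp⟩
      · rintro ⟨a, rfl, rfl, rfl, rfl⟩; exact ⟨rfl, rfl, rfl⟩
    rw [this, Finset.card_image_of_injective _ (by
      intro a b h
      simp only [Prod.mk.injEq] at h
      exact h.1), card_univ, hq]
  have hAB : A ∩ B = D := by
    ext ⟨x, y, z, t⟩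
    simp only [hA, hB, hD, mem_inter, mem_filter, mem_univ, true_and]
    constructor
    · rintro ⟨⟨rfl, rfl⟩, ⟨rfl, h⟩⟩; exact ⟨rfl, rfl, rfl⟩
    · rintro ⟨rfl, rfl, rfl⟩; exact ⟨⟨rfl, rfl⟩, ⟨rfl, rfl⟩⟩
  have hABC : (A ∪ B) ∩ C = D := by
    ext ⟨x, y, z, t⟩
    simp only [hA, hB, hC, hD, mem_inter, mem_union, mem_filter, mem_univ, true_and]
    constructor
    · rintro ⟨h1 | h1, h2⟩
      · obtain ⟨rfl, rfl⟩ := h1; obtain ⟨rfl, h⟩ := h2; exact ⟨rfl, rfl, rfl⟩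
      · obtain ⟨rfl, rfl⟩ := h1; obtain ⟨h, rfl⟩ := h2; exact ⟨h, rfl, rfl⟩
    · rintro ⟨rfl, rfl, rfl⟩; exact ⟨Or.inl ⟨rfl, rfl⟩, ⟨rfl, rfl⟩⟩
  have h1 : (A ∪ B).card + D.card = A.card + B.card := by
    rw [← hAB]; exact Finset.card_union_add_card_inter A B
  have h2 : ((A ∪ B) ∪ C).card + D.card = (A ∪ B).card + C.card := by
    rw [← hABC]; exact Finset.card_union_add_card_inter (A ∪ B) C
  rw [hT]
  omega

end Aux

/-- APN iff the number of zero-sum quadruples mapping to zero sum equals 3q² − 2q. -/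
theorem apn_iff_card_quadruples {m : ℕ} (F : (Fin m → ZMod 2) → (Fin m → ZMod 2)) :
    IsAPN F ↔
      (Finset.univ.filter
          (fun p : (Fin m → ZMod 2) × (Fin m → ZMod 2) × (Fin m → ZMod 2) × (Fin m → ZMod 2) =>
            p.1 + p.2.1 + p.2.2.1 + p.2.2.2 = 0 ∧
            F p.1 + F p.2.1 + F p.2.2.1 + F p.2.2.2 = 0)).card
        = 3 * (2 ^ m) ^ 2 - 2 * 2 ^ m := by
  classical
  set S : Finset ((Fin m → ZMod 2) × (Fin m → ZMod 2) × (Fin m → ZMod 2) × (Fin m → ZMod 2)) :=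
    Finset.univ.filter
      (fun p => p.1 + p.2.1 + p.2.2.1 + p.2.2.2 = 0 ∧
        F p.1 + F p.2.1 + F p.2.2.1 + F p.2.2.2 = 0) with hS
  have hq1 : 1 ≤ 2 ^ m := Nat.one_le_two_pow
  have hqq : 2 ^ m ≤ (2 ^ m) ^ 2 := Nat.le_self_pow two_ne_zero _
  have hct := card_trivQ (m := m)
  have hsub : trivQ m ⊆ S := by
    rintro ⟨x, y, z, t⟩ hp
    simp only [trivQ, mem_filter, mem_univ, true_and] at hp
    simp only [hS, mem_filter, mem_univ, true_and]
    rcases hp with ⟨rfl, rfl⟩ | ⟨rfl, rfl⟩ | ⟨rfl, rfl⟩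
    · exact ⟨by linear_combination vadd_self x + vadd_self z,
        by linear_combination vadd_self (F x) + vadd_self (F z)⟩
    · exact ⟨by linear_combination vadd_self x + vadd_self y,
        by linear_combination vadd_self (F x) + vadd_self (F y)⟩
    · exact ⟨by linear_combination vadd_self x + vadd_self y,
        by linear_combination vadd_self (F x) + vadd_self (F y)⟩
  constructor
  · -- APN → count
    intro hAPN
    have hSeq : S = trivQ m := by
      refine Finset.Subset.antisymm ?_ hsub
      rintro ⟨x, y, z, t⟩ hp
      by_contra hnt
      simp only [hS, mem_filter, mem_univ, true_and] at hp
      obtain ⟨hp1, hp2⟩ := hp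
      simp only [trivQ, mem_filter, mem_univ, true_and, not_or, not_and] at hnt
      obtain ⟨h1, h2, h3⟩ := hnt
      have hxy : x ≠ y := fun h => h1 h (by subst h; rw [← vadd_eq_zero]; linear_combination hp1 - vadd_self x)
      have hxz : x ≠ z := fun h => h2 h (by subst h; rw [← vadd_eq_zero]; linear_combination hp1 - vadd_self x)
      have hxt : x ≠ t := fun h => h3 h (by subst h; rw [← vadd_eq_zero]; linear_combination hp1 - vadd_self x)
      have hyz : y ≠ z := fun h => h3 (by subst h; rw [← vadd_eq_zero]; linear_combination hp1 - vadd_self y) h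
      have hyt : y ≠ t := fun h => h2 (by subst h; rw [← vadd_eq_zero]; linear_combination hp1 - vadd_self y) h
      have hzt : z ≠ t := fun h => h1 (by subst h; rw [← vadd_eq_zero]; linear_combination hp1 - vadd_self z) h
      set u : Fin m → ZMod 2 := x + y with hu'
      have hu : u ≠ 0 := fun h0 => hxy (vadd_eq_zero.mp h0)
      set v : Fin m → ZMod 2 := F x + F y with hv'
      set P : Finset (Fin m → ZMod 2) :=
        Finset.univ.filter (fun s => F (s + u) + F s = v) with hP
      have hxu : x + u = y := by rw [hu']; linear_combination vadd_self x
      have hyu : y + u = x := by rw [hu']; linear_combination vadd_self y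
      have hzu : z + u = t := by rw [hu']; linear_combination hp1 - vadd_self t
      have htu : t + u = z := by rw [hu']; linear_combination hp1 - vadd_self z
      have hxP : x ∈ P := by
        simp only [hP, mem_filter, mem_univ, true_and, hxu]
        rw [add_comm]
      have hyP : y ∈ P := by
        simp only [hP, mem_filter, mem_univ, true_and, hyu]
        exact hv'.symm
      have hzP : z ∈ P := by
        simp only [hP, mem_filter, mem_univ, true_and, hzu, hv']
        linear_combination hp2 - vadd_self (F x) - vadd_self (F y)
      have htP : t ∈ P := by
        simp only [hP, mem_filter, mem_univ, true_and, htu, hv']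
        linear_combination hp2 - vadd_self (F x) - vadd_self (F y)
      have hsubP : ({x, y, z, t} : Finset (Fin m → ZMod 2)) ⊆ P := by
        intro s hs
        simp only [mem_insert, mem_singleton] at hs
        rcases hs with rfl | rfl | rfl | rfl
        exacts [hxP, hyP, hzP, htP]
      have hcard4 : ({x, y, z, t} : Finset (Fin m → ZMod 2)).card = 4 := by
        rw [card_insert_of_notMem (by simp [hxy, hxz, hxt]),
          card_insert_of_notMem (by simp [hyz, hyt]),
          card_insert_of_notMem (by simp [hzt]), card_singleton]
      have hle4 := Finset.card_le_card hsubP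
      rw [hcard4] at hle4
      have hle2 : P.card ≤ 2 := hAPN u hu v
      omega
    rw [hSeq]
    omega
  · -- count → APN
    intro hc
    intro u hu v
    by_contra h3
    push_neg at h3
    set P : Finset (Fin m → ZMod 2) :=
      Finset.univ.filter (fun s => F (s + u) + F s = v) with hP
    have h3' : 2 < P.card := h3
    obtain ⟨x, hx⟩ := Finset.card_pos.mp (by omega : 0 < P.card)
    have hxP : F (x + u) + F x = v := by
      simpa only [hP, mem_filter, mem_univ, true_and] using hx
    have hxuP : x + u ∈ P := by
      simp only [hP, mem_filter, mem_univ, true_and]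
      have h0 : x + u + u = x := by linear_combination vadd_self u
      rw [h0, add_comm]
      exact hxP
    have hsd : 0 < (P \ {x, x + u}).card := by
      have h1 : ({x, x + u} : Finset (Fin m → ZMod 2)).card ≤ 2 :=
        le_trans (card_insert_le _ _) (by simp)
      have h2 := Finset.le_card_sdiff ({x, x + u} : Finset (Fin m → ZMod 2)) P
      omega
    obtain ⟨z, hz⟩ := Finset.card_pos.mp hsd
    rw [Finset.mem_sdiff, mem_insert, mem_singleton] at hz
    obtain ⟨hzP, hzne⟩ := hz
    push_neg at hzne
    obtain ⟨hzx, hzxu⟩ := hzne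
    have hzP' : F (z + u) + F z = v := by
      simpa only [hP, mem_filter, mem_univ, true_and] using hzP
    have hpS : (x, x + u, z, z + u) ∈ S := by
      simp only [hS, mem_filter, mem_univ, true_and]
      constructor
      · linear_combination vadd_self x + vadd_self z + vadd_self u
      · linear_combination hxP + hzP' + vadd_self v
    have hpT : (x, x + u, z, z + u) ∉ trivQ m := by
      simp only [trivQ, mem_filter, mem_univ, true_and, not_or, not_and]
      refine ⟨fun h _ => hu (by linear_combination -h), fun h _ => hzx h.symm,
        fun h _ => hzxu (by linear_combination -h - vadd_self u)⟩
    have hss : trivQ m ⊂ S := ⟨hsub, fun hST => hpT (hST hpS)⟩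
    have := Finset.card_lt_card hss
    omega
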